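/- Let (A; {E_i}; A*; {E*_i}) be a Leonard system on V with switching element S, and let D be the subalgebra generated by A. For a nonzero linear operator X on V, the following are equivalent: (i) X is a scalar multiple of S; (ii) X ∈ D and X E*_0 V ⊆ E*_d V. Moreover if these hold then X E*_0 V = E*_d V. -/

import Mathlib

open Polynomial

/-- The primitive idempotent `E_i = ∏_{j ≠ i} (A - θ_j I)/(θ_i - θ_j)` of a
multiplicity-free operator `A` with eigenvalues `θ_0, …, θ_d`. -/
noncomputable def primIdem {K : Type} [Field K] {V : Type} [AddCommGroup V] [Module K V]
    {d : ℕ} (A : Module.End K V) (θ : Fin (d+1) → K) (i : Fin (d+1)) : Module.End K V :=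
  Polynomial.aeval A (∏ j ∈ Finset.univ.erase i, ((θ i - θ j)⁻¹ • (X - C (θ j))))

/-- The polynomial `τ_i(λ) = (λ-θ_0)(λ-θ_1)⋯(λ-θ_{i-1})`. -/
noncomputable def tauP {K : Type} [Field K] (d : ℕ) (θ : Fin (d+1) → K) (i : ℕ) :
    Polynomial K :=
  ∏ k ∈ Finset.univ.filter (fun k : Fin (d+1) => (k : ℕ) < i), (X - C (θ k))

/-- The polynomial `η_i(λ) = (λ-θ_d)(λ-θ_{d-1})⋯(λ-θ_{d-i+1})`. -/
noncomputable def etaP {K : Type} [Field K] (d : ℕ) (θ : Fin (d+1) → K) (i : ℕ) :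
    Polynomial K :=
  ∏ k ∈ Finset.univ.filter (fun k : Fin (d+1) => d - i < (k : ℕ)), (X - C (θ k))

/-- A Leonard system on a `(d+1)`-dimensional vector space `V` over a field `K`. -/
structure LeonardSystem (K V : Type) [Field K] [AddCommGroup V] [Module K V] (d : ℕ) where
  A : Module.End K V
  As : Module.End K V
  θ : Fin (d+1) → K
  θs : Fin (d+1) → K
  hfin : FiniteDimensional K V
  hdim : Module.finrank K V = d + 1
  θ_inj : Function.Injective θ
  θs_inj : Function.Injective θs
  hEig : ∀ i, Module.End.HasEigenvalue A (θ i)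
  hEigs : ∀ i, Module.End.HasEigenvalue As (θs i)
  hFar : ∀ i j : Fin (d+1), ((i:ℕ) + 1 < j ∨ (j:ℕ) + 1 < i) →
    primIdem A θ i * As * primIdem A θ j = 0
  hNear : ∀ i j : Fin (d+1), ((i:ℕ) + 1 = j ∨ (j:ℕ) + 1 = i) →
    primIdem A θ i * As * primIdem A θ j ≠ 0
  hFars : ∀ i j : Fin (d+1), ((i:ℕ) + 1 < j ∨ (j:ℕ) + 1 < i) →
    primIdem As θs i * A * primIdem As θs j = 0
  hNears : ∀ i j : Fin (d+1), ((i:ℕ) + 1 = j ∨ (j:ℕ) + 1 = i) →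
    primIdem As θs i * A * primIdem As θs j ≠ 0

namespace LeonardSystem

variable {K : Type} [Field K] {V : Type} [AddCommGroup V] [Module K V] {d : ℕ}
  (L : LeonardSystem K V d)

/-- `E_i`, the `i`-th primitive idempotent of `A`. -/
noncomputable def E (i : Fin (d+1)) : Module.End K V := primIdem L.A L.θ i

/-- `E*_i`, the `i`-th primitive idempotent of `A*`. -/
noncomputable def Es (i : Fin (d+1)) : Module.End K V := primIdem L.As L.θs i

/-- `τ_i(A)`. -/
noncomputable def tau (i : ℕ) : Module.End K V := Polynomial.aeval L.A (tauP d L.θ i)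

/-- `η_i(A)`. -/
noncomputable def eta (i : ℕ) : Module.End K V := Polynomial.aeval L.A (etaP d L.θ i)

/-- The first split sequence `φ_i = (θ*_0-θ*_i) tr(τ_i(A)E*_0)/tr(τ_{i-1}(A)E*_0)`,
meaningful for `1 ≤ i ≤ d`. -/
noncomputable def φ (i : ℕ) : K :=
  if h : i < d + 1 then
    (L.θs 0 - L.θs ⟨i, h⟩) * (LinearMap.trace K V (L.tau i * L.Es 0))
      / (LinearMap.trace K V (L.tau (i-1) * L.Es 0))
  else 0

/-- The second split sequence `ϕ_i = (θ*_0-θ*_i) tr(η_i(A)E*_0)/tr(η_{i-1}(A)E*_0)`,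
meaningful for `1 ≤ i ≤ d`. -/
noncomputable def ϕ (i : ℕ) : K :=
  if h : i < d + 1 then
    (L.θs 0 - L.θs ⟨i, h⟩) * (LinearMap.trace K V (L.eta i * L.Es 0))
      / (LinearMap.trace K V (L.eta (i-1) * L.Es 0))
  else 0

/-- The switching element `S = ∑_r (ϕ_d⋯ϕ_{d-r+1})/(φ_1⋯φ_r) E_r`. -/
noncomputable def S : Module.End K V :=
  ∑ r : Fin (d+1),
    ((∏ k ∈ Finset.Icc (d - (r:ℕ) + 1) d, L.ϕ k) / (∏ k ∈ Finset.Icc 1 (r:ℕ), L.φ k)) • L.E r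

/-- The dual switching element `S* = ∑_r (ϕ_1⋯ϕ_r)/(φ_1⋯φ_r) E*_r`. -/
noncomputable def Ss : Module.End K V :=
  ∑ r : Fin (d+1),
    ((∏ k ∈ Finset.Icc 1 (r:ℕ), L.ϕ k) / (∏ k ∈ Finset.Icc 1 (r:ℕ), L.φ k)) • L.Es r

end LeonardSystem

section Helpers

variable {K : Type} [Field K] {V : Type} [AddCommGroup V] [Module K V] {n : ℕ}

lemma pow_apply_eigen (M : Module.End K V) (μ : K) (v : V) (hv : M v = μ • v) (k : ℕ) :
    (M ^ k) v = μ ^ k • v := by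
  induction k with
  | zero => simp
  | succ k ih =>
      rw [pow_succ, Module.End.mul_apply, hv, map_smul, ih, smul_smul, ← pow_succ']

lemma aeval_apply_eigen (M : Module.End K V) (μ : K) (v : V) (hv : M v = μ • v)
    (f : Polynomial K) : (Polynomial.aeval M f) v = f.eval μ • v := by
  induction f using Polynomial.induction_on' with
  | add p q hp hq =>
      rw [map_add, LinearMap.add_apply, hp, hq, Polynomial.eval_add, add_smul]
  | monomial k a =>
      rw [Polynomial.aeval_monomial, Polynomial.eval_monomial, Module.End.mul_apply,
        pow_apply_eigen M μ v hv, map_smul, Module.algebraMap_end_apply, smul_smul, mul_comm]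

lemma diag_repr (b : Module.Basis (Fin n) K V) (M : Module.End K V) (μ : Fin n → K)
    (h : ∀ i, M (b i) = μ i • b i) (x : V) (j : Fin n) :
    b.repr (M x) j = μ j * b.repr x j := by
  have hx : M x = ∑ i, (μ i * b.repr x i) • b i := by
    conv_lhs => rw [← b.sum_repr x]
    rw [map_sum]
    exact Finset.sum_congr rfl fun i _ => by rw [map_smul, h, smul_smul, mul_comm]
  rw [hx, map_sum, Finset.sum_apply']
  rw [Finset.sum_eq_single j]
  · simp
  · intro i _ hij
    simp [Module.Basis.repr_self_apply, hij]
  · simp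

lemma mat_repr (b : Module.Basis (Fin n) K V) (M : Module.End K V) (x : V) (j : Fin n) :
    b.repr (M x) j = ∑ i, b.repr x i * b.repr (M (b i)) j := by
  conv_lhs => rw [← b.sum_repr x, map_sum, map_sum, Finset.sum_apply']
  exact Finset.sum_congr rfl fun i _ => by
    rw [map_smul, map_smul, Finsupp.smul_apply, smul_eq_mul]

lemma primIdem_apply_basis {d : ℕ} (b : Module.Basis (Fin (d+1)) K V) (M : Module.End K V)
    (μ : Fin (d+1) → K) (hμ : Function.Injective μ) (h : ∀ i, M (b i) = μ i • b i)
    (i s : Fin (d+1)) :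
    primIdem M μ i (b s) = (if s = i then (1:K) else 0) • b s := by
  rw [primIdem, aeval_apply_eigen M (μ s) (b s) (h s), Polynomial.eval_prod]
  congr 1
  by_cases hsi : s = i
  · subst hsi
    rw [if_pos rfl]
    apply Finset.prod_eq_one
    intro j hj
    have hne : μ s - μ j ≠ 0 :=
      sub_ne_zero.mpr fun hh => (Finset.mem_erase.mp hj).1 (hμ hh).symm
    simp [Polynomial.eval_smul, smul_eq_mul, inv_mul_cancel₀ hne]
  · rw [if_neg hsi]
    apply Finset.prod_eq_zero (Finset.mem_erase.mpr ⟨hsi, Finset.mem_univ s⟩)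
    simp [Polynomial.eval_smul, smul_eq_mul]

lemma primIdem_apply {d : ℕ} (b : Module.Basis (Fin (d+1)) K V) (M : Module.End K V)
    (μ : Fin (d+1) → K) (hμ : Function.Injective μ) (h : ∀ i, M (b i) = μ i • b i)
    (i : Fin (d+1)) (x : V) :
    primIdem M μ i x = b.repr x i • b i := by
  conv_lhs => rw [← b.sum_repr x, map_sum]
  rw [Finset.sum_eq_single i]
  · rw [map_smul, primIdem_apply_basis b M μ hμ h i i, if_pos rfl, one_smul]
  · intro s _ hsi
    rw [map_smul, primIdem_apply_basis b M μ hμ h i s, if_neg hsi, zero_smul, smul_zero]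
  · simp

lemma trace_mul_primIdem {d : ℕ} (b : Module.Basis (Fin (d+1)) K V) (M N : Module.End K V)
    (μ : Fin (d+1) → K) (hμ : Function.Injective μ) (h : ∀ i, M (b i) = μ i • b i)
    (i : Fin (d+1)) :
    LinearMap.trace K V (N * primIdem M μ i) = b.repr (N (b i)) i := by
  classical
  rw [LinearMap.trace_eq_matrix_trace K b, Matrix.trace]
  rw [Finset.sum_eq_single i]
  · rw [Matrix.diag_apply, LinearMap.toMatrix_apply, Module.End.mul_apply,
      primIdem_apply_basis b M μ hμ h i i, if_pos rfl, one_smul]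
  · intro s _ hsi
    rw [Matrix.diag_apply, LinearMap.toMatrix_apply, Module.End.mul_apply,
      primIdem_apply_basis b M μ hμ h i s, if_neg hsi, zero_smul, map_zero]
    simp
  · simp

lemma sandwich_eq_zero_iff {d : ℕ} (b : Module.Basis (Fin (d+1)) K V) (M N : Module.End K V)
    (μ : Fin (d+1) → K) (hμ : Function.Injective μ) (h : ∀ i, M (b i) = μ i • b i)
    (i j : Fin (d+1)) :
    primIdem M μ i * N * primIdem M μ j = 0 ↔ b.repr (N (b j)) i = 0 := by
  constructor
  · intro h0
    have h1 := congrArg (fun f : Module.End K V => f (b j)) h0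
    simp only [Module.End.mul_apply, LinearMap.zero_apply] at h1
    rw [primIdem_apply_basis b M μ hμ h j j, if_pos rfl, one_smul,
      primIdem_apply b M μ hμ h i] at h1
    rcases smul_eq_zero.mp h1 with h2 | h2
    · exact h2
    · exact absurd h2 (b.ne_zero i)
  · intro h0
    apply LinearMap.ext
    intro x
    simp only [Module.End.mul_apply, LinearMap.zero_apply]
    rw [primIdem_apply b M μ hμ h j, map_smul, map_smul,
      primIdem_apply b M μ hμ h i, h0, zero_smul, smul_zero]

end Helpers

section TauLemmas

variable {K : Type} [Field K] {d : ℕ}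

lemma tauP_zero (θ : Fin (d+1) → K) : tauP d θ 0 = 1 := by
  unfold tauP
  rw [Finset.filter_false_of_mem, Finset.prod_empty]
  intro k _; omega

lemma tauP_succ (θ : Fin (d+1) → K) (i : ℕ) (hi : i < d+1) :
    tauP d θ (i+1) = tauP d θ i * (X - C (θ ⟨i, hi⟩)) := by
  unfold tauP
  have hset : Finset.univ.filter (fun k : Fin (d+1) => (k : ℕ) < i + 1)
      = insert (⟨i, hi⟩ : Fin (d+1)) (Finset.univ.filter (fun k : Fin (d+1) => (k : ℕ) < i)) := by
    ext k
    simp only [Finset.mem_filter, Finset.mem_insert, Finset.mem_univ, true_and, Fin.ext_iff]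
    omega
  rw [hset, Finset.prod_insert (by simp), mul_comm]

lemma tauP_eval (θ : Fin (d+1) → K) (i : ℕ) (t : K) :
    (tauP d θ i).eval t
      = ∏ k ∈ Finset.univ.filter (fun k : Fin (d+1) => (k : ℕ) < i), (t - θ k) := by
  unfold tauP
  rw [Polynomial.eval_prod]
  simp

lemma tauP_eval_eq_zero (θ : Fin (d+1) → K) {i : ℕ} {s : Fin (d+1)} (hs : (s:ℕ) < i) :
    (tauP d θ i).eval (θ s) = 0 := by
  rw [tauP_eval]
  exact Finset.prod_eq_zero (Finset.mem_filter.mpr ⟨Finset.mem_univ s, hs⟩) (by ring)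

lemma tauP_eval_ne_zero (θ : Fin (d+1) → K) (hθ : Function.Injective θ)
    {i : ℕ} {s : Fin (d+1)} (hs : i ≤ (s:ℕ)) : (tauP d θ i).eval (θ s) ≠ 0 := by
  rw [tauP_eval]
  apply Finset.prod_ne_zero_iff.mpr
  intro k hk
  have hk' : (k:ℕ) < i := (Finset.mem_filter.mp hk).2
  exact sub_ne_zero.mpr fun hh => by have := hθ hh; subst this; omega

lemma etaP_eval (θ : Fin (d+1) → K) (i : ℕ) (t : K) :
    (etaP d θ i).eval t
      = ∏ k ∈ Finset.univ.filter (fun k : Fin (d+1) => d - i < (k : ℕ)), (t - θ k) := by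
  unfold etaP
  rw [Polynomial.eval_prod]
  simp

lemma etaP_eval_eq_zero (θ : Fin (d+1) → K) {i : ℕ} {s : Fin (d+1)} (hs : d - i < (s:ℕ)) :
    (etaP d θ i).eval (θ s) = 0 := by
  rw [etaP_eval]
  exact Finset.prod_eq_zero (Finset.mem_filter.mpr ⟨Finset.mem_univ s, hs⟩) (by ring)

lemma etaP_eval_ne_zero (θ : Fin (d+1) → K) (hθ : Function.Injective θ)
    {i : ℕ} {s : Fin (d+1)} (hs : (s:ℕ) ≤ d - i) : (etaP d θ i).eval (θ s) ≠ 0 := by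
  rw [etaP_eval]
  apply Finset.prod_ne_zero_iff.mpr
  intro k hk
  have hk' : d - i < (k:ℕ) := (Finset.mem_filter.mp hk).2
  exact sub_ne_zero.mpr fun hh => by have := hθ hh; subst this; omega

lemma tauP_monic (θ : Fin (d+1) → K) (i : ℕ) : (tauP d θ i).Monic :=
  monic_prod_of_monic _ _ fun k _ => monic_X_sub_C (θ k)

lemma card_filter_lt (i : ℕ) (hi : i ≤ d + 1) :
    (Finset.univ.filter (fun k : Fin (d+1) => (k : ℕ) < i)).card = i := by
  rw [show (Finset.univ.filter (fun k : Fin (d+1) => (k : ℕ) < i))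
      = (Finset.range i).attachFin (fun m hm => by
          have := Finset.mem_range.mp hm; omega) from ?_]
  · rw [Finset.card_attachFin]; exact Finset.card_range i
  · ext k
    simp [Finset.mem_attachFin]

lemma tauP_natDegree (θ : Fin (d+1) → K) (i : ℕ) (hi : i ≤ d + 1) :
    (tauP d θ i).natDegree = i := by
  unfold tauP
  rw [natDegree_prod_of_monic _ _ fun k _ => monic_X_sub_C (θ k)]
  simp [natDegree_X_sub_C, card_filter_lt i hi]

lemma tauP_rev (θ : Fin (d+1) → K) (i : ℕ) (hi : i ≤ d) :
    tauP d (fun k => θ k.rev) i = etaP d θ i := by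
  unfold tauP etaP
  apply Finset.prod_nbij' (fun k => k.rev) (fun k => k.rev)
  · intro k hk
    have := (Finset.mem_filter.mp hk).2
    have hv := Fin.val_rev k
    have hk2 := k.isLt
    refine Finset.mem_filter.mpr ⟨Finset.mem_univ _, ?_⟩
    omega
  · intro k hk
    have := (Finset.mem_filter.mp hk).2
    have hv := Fin.val_rev k
    have hk2 := k.isLt
    refine Finset.mem_filter.mpr ⟨Finset.mem_univ _, ?_⟩
    omega
  · intro k _; exact Fin.rev_rev k
  · intro k _; exact Fin.rev_rev k
  · intro k _; rfl

end TauLemmas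

/-- Working context: both operators diagonalized with tridiagonality data. -/
structure Ctx (K V : Type) [Field K] [AddCommGroup V] [Module K V] (d : ℕ) where
  A : Module.End K V
  As : Module.End K V
  θ : Fin (d+1) → K
  θs : Fin (d+1) → K
  P : Module.Basis (Fin (d+1)) K V
  Q : Module.Basis (Fin (d+1)) K V
  hθ : Function.Injective θ
  hθs : Function.Injective θs
  hP : ∀ i, A (P i) = θ i • P i
  hQ : ∀ i, As (Q i) = θs i • Q i
  hAQ0 : ∀ i j : Fin (d+1), ((i:ℕ)+1 < j ∨ (j:ℕ)+1 < i) → Q.repr (A (Q j)) i = 0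
  hAQup : ∀ i j : Fin (d+1), (j:ℕ)+1 = i → Q.repr (A (Q j)) i ≠ 0
  hAQdn : ∀ i j : Fin (d+1), (i:ℕ)+1 = j → Q.repr (A (Q j)) i ≠ 0
  hAsP0 : ∀ i j : Fin (d+1), ((i:ℕ)+1 < j ∨ (j:ℕ)+1 < i) → P.repr (As (P j)) i = 0
  hAsPdn : ∀ i j : Fin (d+1), (i:ℕ)+1 = j → P.repr (As (P j)) i ≠ 0

namespace Ctx

variable {K V : Type} [Field K] [AddCommGroup V] [Module K V] {d : ℕ} (c : Ctx K V d)

noncomputable def ξ : V := c.Q 0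

noncomputable def u (i : ℕ) : V := Polynomial.aeval c.A (tauP d c.θ i) c.ξ

noncomputable def ε (r : Fin (d+1)) : K := c.P.repr c.ξ r

lemma u_zero : c.u 0 = c.ξ := by
  rw [u, tauP_zero]; simp

lemma u_succ (i : ℕ) (hi : i < d+1) :
    c.u (i+1) = c.A (c.u i) - c.θ ⟨i, hi⟩ • c.u i := by
  rw [u, tauP_succ c.θ i hi, mul_comm, map_mul, Module.End.mul_apply]
  rw [map_sub, Polynomial.aeval_X, Polynomial.aeval_C]
  rw [LinearMap.sub_apply, Module.algebraMap_end_apply]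
  rfl

lemma aeval_reprP (f : Polynomial K) (x : V) (r : Fin (d+1)) :
    c.P.repr (Polynomial.aeval c.A f x) r = f.eval (c.θ r) * c.P.repr x r :=
  diag_repr c.P _ (fun s => f.eval (c.θ s))
    (fun s => aeval_apply_eigen c.A (c.θ s) (c.P s) (c.hP s) f) x r

lemma u_reprP (i : ℕ) (r : Fin (d+1)) :
    c.P.repr (c.u i) r = (tauP d c.θ i).eval (c.θ r) * c.ε r :=
  c.aeval_reprP _ _ r

lemma As_reprQ (x : V) (j : Fin (d+1)) :
    c.Q.repr (c.As x) j = c.θs j * c.Q.repr x j :=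
  diag_repr c.Q c.As c.θs c.hQ x j

noncomputable def ydiag (l : ℕ) : K :=
  if h : l < d then c.Q.repr (c.A (c.Q ⟨l, by omega⟩)) ⟨l+1, by omega⟩ else 1

lemma ydiag_ne_zero (l : ℕ) : c.ydiag l ≠ 0 := by
  unfold ydiag
  split
  · exact c.hAQup _ _ rfl
  · exact one_ne_zero

noncomputable def yprod (i : ℕ) : K := ∏ l ∈ Finset.range i, c.ydiag l

lemma yprod_ne_zero (i : ℕ) : c.yprod i ≠ 0 :=
  Finset.prod_ne_zero_iff.mpr fun l _ => c.ydiag_ne_zero l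

lemma u_tri (i : ℕ) (hi : i ≤ d) :
    (∀ j : Fin (d+1), i < (j:ℕ) → c.Q.repr (c.u i) j = 0) ∧
      c.Q.repr (c.u i) ⟨i, by omega⟩ = c.yprod i := by
  induction i with
  | zero =>
      constructor
      · intro j hj
        rw [u_zero]
        show c.Q.repr (c.Q 0) j = 0
        rw [Module.Basis.repr_self_apply]
        rw [if_neg]
        intro hh
        rw [← hh] at hj
        simp at hj
      · rw [u_zero]
        show c.Q.repr (c.Q 0) ⟨0, by omega⟩ = c.yprod 0
        rw [Module.Basis.repr_self_apply, if_pos (Fin.ext (by simp))]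
        simp [yprod]
  | succ i ih =>
      obtain ⟨ihz, ihtop⟩ := ih (by omega)
      have hrepr : ∀ j : Fin (d+1), c.Q.repr (c.u (i+1)) j
          = (∑ l, c.Q.repr (c.u i) l * c.Q.repr (c.A (c.Q l)) j)
            - c.θ ⟨i, by omega⟩ * c.Q.repr (c.u i) j := by
        intro j
        rw [c.u_succ i (by omega), map_sub, Finsupp.sub_apply, mat_repr c.Q c.A,
          map_smul, Finsupp.smul_apply, smul_eq_mul]
      constructor
      · intro j hj
        rw [hrepr, ihz j (by omega), mul_zero, sub_zero]
        apply Finset.sum_eq_zero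
        intro l _
        by_cases hl : i < (l:ℕ)
        · rw [ihz l hl, zero_mul]
        · rw [c.hAQ0 j l (Or.inr (by omega)), mul_zero]
      · rw [hrepr, ihz ⟨i+1, by omega⟩ (by simp), mul_zero, sub_zero]
        rw [Finset.sum_eq_single (⟨i, by omega⟩ : Fin (d+1))]
        · have hyd : c.ydiag i = c.Q.repr (c.A (c.Q ⟨i, by omega⟩)) ⟨i+1, by omega⟩ := by
            unfold ydiag
            rw [dif_pos (by omega : i < d)]
          have h1 : c.yprod (i+1) = c.yprod i * c.ydiag i := Finset.prod_range_succ _ i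
          rw [ihtop, h1, hyd]
        · intro l _ hl
          by_cases hli : i < (l:ℕ)
          · rw [ihz l hli, zero_mul]
          · rw [c.hAQ0 _ l (Or.inr ?_), mul_zero]
            have hl2 : (l:ℕ) < i :=
              lt_of_le_of_ne (by omega) (fun hh => hl (Fin.ext hh))
            show (l:ℕ) + 1 < i + 1
            omega
        · simp

lemma u_span (i : ℕ) (hi : i ≤ d + 1) :
    ∀ x : V, (∀ j : Fin (d+1), i ≤ (j:ℕ) → c.Q.repr x j = 0) →
    ∃ a : ℕ → K, x = ∑ l ∈ Finset.range i, a l • c.u l := by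
  induction i with
  | zero =>
      intro x hx
      refine ⟨0, ?_⟩
      rw [Finset.range_zero, Finset.sum_empty]
      have : c.Q.repr x = 0 := by
        ext j; exact hx j (by omega)
      simpa using (c.Q.repr.map_eq_zero_iff).mp this
  | succ i ih =>
      intro x hx
      set t := c.Q.repr x ⟨i, by omega⟩ / c.yprod i with ht
      have key : ∀ j : Fin (d+1), i ≤ (j:ℕ) → c.Q.repr (x - t • c.u i) j = 0 := by
        intro j hj
        rw [map_sub, map_smul, Finsupp.sub_apply, Finsupp.smul_apply, smul_eq_mul]
        rcases eq_or_lt_of_le hj with hj' | hj'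
        · have hj2 : j = ⟨i, by omega⟩ := Fin.ext hj'.symm
          rw [hj2, (c.u_tri i (by omega)).2, ht]
          field_simp [c.yprod_ne_zero i]
          ring
        · rw [hx j (by omega), (c.u_tri i (by omega)).1 j hj', mul_zero, sub_zero]
      obtain ⟨a, ha⟩ := ih (by omega) _ key
      refine ⟨fun l => if l = i then t else a l, ?_⟩
      rw [Finset.sum_range_succ]
      have h2 : ∀ l ∈ Finset.range i, (if l = i then t else a l) • c.u l = a l • c.u l := by
        intro l hl
        rw [if_neg (by have := Finset.mem_range.mp hl; omega)]
      rw [Finset.sum_congr rfl h2, ← ha]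
      simp

lemma exists_poly (x : V) : ∃ f : Polynomial K, x = Polynomial.aeval c.A f c.ξ := by
  obtain ⟨a, ha⟩ := c.u_span (d+1) (le_refl _) x (fun j hj => by
    have := j.isLt; omega)
  refine ⟨∑ l ∈ Finset.range (d+1), Polynomial.C (a l) * tauP d c.θ l, ?_⟩
  rw [ha, map_sum, LinearMap.sum_apply]
  apply Finset.sum_congr rfl
  intro l _
  rw [map_mul, Polynomial.aeval_C, Module.End.mul_apply, Module.algebraMap_end_apply]
  rfl

lemma eps_ne_zero (r : Fin (d+1)) : c.ε r ≠ 0 := by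
  intro h0
  obtain ⟨f, hf⟩ := c.exists_poly (c.P r)
  have h1 : c.P.repr (c.P r) r = f.eval (c.θ r) * c.ε r := by
    rw [hf]; exact c.aeval_reprP f c.ξ r
  rw [h0, mul_zero, Module.Basis.repr_self_apply, if_pos rfl] at h1
  exact one_ne_zero h1

lemma split_exists (i : ℕ) (h1 : 1 ≤ i) (h2 : i ≤ d) :
    ∃ φv : K, φv ≠ 0 ∧
      c.As (c.u i) = c.θs ⟨i, by omega⟩ • c.u i + φv • c.u (i-1) := by
  set x := c.As (c.u i) - c.θs ⟨i, by omega⟩ • c.u i with hxdef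
  have hxQ : ∀ j : Fin (d+1),
      c.Q.repr x j = (c.θs j - c.θs ⟨i, by omega⟩) * c.Q.repr (c.u i) j := by
    intro j
    rw [hxdef, map_sub, Finsupp.sub_apply, c.As_reprQ, map_smul, Finsupp.smul_apply,
      smul_eq_mul]
    ring
  have hxQ0 : ∀ j : Fin (d+1), i ≤ (j:ℕ) → c.Q.repr x j = 0 := by
    intro j hj
    rcases eq_or_lt_of_le hj with hj' | hj'
    · have hj2 : j = ⟨i, by omega⟩ := Fin.ext hj'.symm
      rw [hxQ, hj2, sub_self, zero_mul]
    · rw [hxQ, (c.u_tri i h2).1 j hj', mul_zero]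
  obtain ⟨a, ha⟩ := c.u_span i (by omega) x hxQ0
  have hxsum : ∀ r : Fin (d+1), c.P.repr x r
      = ∑ m ∈ Finset.range i, a m * ((tauP d c.θ m).eval (c.θ r) * c.ε r) := by
    intro r
    rw [ha, map_sum, Finset.sum_apply']
    apply Finset.sum_congr rfl
    intro m _
    rw [map_smul, Finsupp.smul_apply, smul_eq_mul, c.u_reprP]
  have hxP : ∀ r : Fin (d+1), (r:ℕ) + 2 ≤ i → c.P.repr x r = 0 := by
    intro r hr
    rw [hxdef, map_sub, Finsupp.sub_apply, map_smul, Finsupp.smul_apply, smul_eq_mul]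
    have hri : (r:ℕ) < i := by omega
    have h3 : c.P.repr (c.u i) r = 0 := by
      rw [c.u_reprP, tauP_eval_eq_zero c.θ hri, zero_mul]
    rw [h3, mul_zero, sub_zero, mat_repr c.P c.As (c.u i) r]
    apply Finset.sum_eq_zero
    intro l _
    by_cases hl : (l:ℕ) < i
    · rw [c.u_reprP, tauP_eval_eq_zero c.θ hl, zero_mul, zero_mul]
    · have hrl : (r:ℕ) + 1 < (l:ℕ) := by omega
      rw [c.hAsP0 r l (Or.inl hrl), mul_zero]
  have ha0 : ∀ l, l < i - 1 → a l = 0 := by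
    intro l
    induction l using Nat.strong_induction_on with
    | _ l ihl =>
      intro hl
      have hld : l < d + 1 := by omega
      have hre := hxsum ⟨l, hld⟩
      have hlp : ((⟨l, hld⟩ : Fin (d+1)):ℕ) + 2 ≤ i := by
        have : l + 2 ≤ i := by omega
        exact this
      rw [hxP ⟨l, hld⟩ hlp] at hre
      have hsum : ∑ m ∈ Finset.range i,
          a m * ((tauP d c.θ m).eval (c.θ ⟨l, hld⟩) * c.ε ⟨l, hld⟩) = 0 := hre.symm
      rw [Finset.sum_eq_single l] at hsum
      · have hne1 : (tauP d c.θ l).eval (c.θ ⟨l, hld⟩) ≠ 0 := by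
          have hll : l ≤ ((⟨l, hld⟩ : Fin (d+1)):ℕ) := le_refl l
          exact tauP_eval_ne_zero c.θ c.hθ hll
        rcases mul_eq_zero.mp hsum with h4 | h4
        · exact h4
        · exact absurd h4 (mul_ne_zero hne1 (c.eps_ne_zero _))
      · intro m hm hml
        rcases Nat.lt_or_ge m l with hml2 | hml2
        · rw [ihl m hml2 (by omega), zero_mul]
        · have hlm : ((⟨l, hld⟩ : Fin (d+1)):ℕ) < m := by
            have : l < m := by omega
            exact this
          rw [tauP_eval_eq_zero c.θ hlm, zero_mul, mul_zero]
      · intro hli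
        exact absurd (Finset.mem_range.mpr (by omega)) hli
  have hx2 : x = a (i-1) • c.u (i-1) := by
    rw [ha, Finset.sum_eq_single (i-1)]
    · intro m hm hmi
      rw [ha0 m (by have := Finset.mem_range.mp hm; omega), zero_smul]
    · intro hni
      exact absurd (Finset.mem_range.mpr (by omega)) hni
  have him : i - 1 < d + 1 := by omega
  have hid : i < d + 1 := by omega
  have hP1 : c.P.repr x ⟨i-1, him⟩
      = a (i-1) * ((tauP d c.θ (i-1)).eval (c.θ ⟨i-1, him⟩) * c.ε ⟨i-1, him⟩) := by
    rw [hx2, map_smul, Finsupp.smul_apply, smul_eq_mul, c.u_reprP]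
  have hP2 : c.P.repr x ⟨i-1, him⟩
      = ((tauP d c.θ i).eval (c.θ ⟨i, hid⟩) * c.ε ⟨i, hid⟩)
        * c.P.repr (c.As (c.P ⟨i, hid⟩)) ⟨i-1, him⟩ := by
    rw [hxdef, map_sub, Finsupp.sub_apply, map_smul, Finsupp.smul_apply, smul_eq_mul]
    have h3 : c.P.repr (c.u i) ⟨i-1, him⟩ = 0 := by
      have hlt : ((⟨i-1, him⟩ : Fin (d+1)):ℕ) < i := by
        have : i - 1 < i := by omega
        exact this
      rw [c.u_reprP, tauP_eval_eq_zero c.θ hlt, zero_mul]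
    rw [h3, mul_zero, sub_zero, mat_repr c.P c.As (c.u i) ⟨i-1, him⟩]
    rw [Finset.sum_eq_single (⟨i, hid⟩ : Fin (d+1))]
    · rw [c.u_reprP]
    · intro l _ hl
      rcases Nat.lt_or_ge (l:ℕ) i with hl2 | hl2
      · rw [c.u_reprP, tauP_eval_eq_zero c.θ hl2, zero_mul, zero_mul]
      · have hl3 : (l:ℕ) ≠ i := fun hh => hl (Fin.ext hh)
        have hl4 : ((⟨i-1, him⟩ : Fin (d+1)):ℕ) + 1 < (l:ℕ) := by
          have : i - 1 + 1 < (l:ℕ) := by omega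
          exact this
        rw [c.hAsP0 _ l (Or.inl hl4), mul_zero]
    · simp
  have hane : a (i-1) ≠ 0 := by
    intro h0
    rw [h0, zero_mul] at hP1
    rw [hP1] at hP2
    have hne2 : ((tauP d c.θ i).eval (c.θ ⟨i, hid⟩) * c.ε ⟨i, hid⟩)
        * c.P.repr (c.As (c.P ⟨i, hid⟩)) ⟨i-1, him⟩ ≠ 0 := by
      apply mul_ne_zero
      · apply mul_ne_zero
        · have hii : i ≤ ((⟨i, hid⟩ : Fin (d+1)):ℕ) := le_refl i
          exact tauP_eval_ne_zero c.θ c.hθ hii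
        · exact c.eps_ne_zero _
      · apply c.hAsPdn
        show (i - 1) + 1 = i
        omega
    exact hne2 hP2.symm
  refine ⟨a (i-1), hane, ?_⟩
  have : c.As (c.u i) = c.θs ⟨i, by omega⟩ • c.u i + x := by
    rw [hxdef]; abel
  rw [this, hx2]

noncomputable def φh (i : ℕ) : K :=
  if h : 1 ≤ i ∧ i ≤ d then (c.split_exists i h.1 h.2).choose else 1

lemma φh_ne_zero (i : ℕ) : c.φh i ≠ 0 := by
  unfold φh
  by_cases h : 1 ≤ i ∧ i ≤ d
  · rw [dif_pos h]
    exact (c.split_exists i h.1 h.2).choose_spec.1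
  · rw [dif_neg h]
    exact one_ne_zero

lemma split (i : ℕ) (h1 : 1 ≤ i) (h2 : i ≤ d) :
    c.As (c.u i) = c.θs ⟨i, by omega⟩ • c.u i + c.φh i • c.u (i-1) := by
  have h := (c.split_exists i h1 h2).choose_spec.2
  unfold φh
  rw [dif_pos ⟨h1, h2⟩]
  exact h

noncomputable def f (i : ℕ) : K := c.Q.repr (c.u i) 0

lemma f_zero : c.f 0 = 1 := by
  rw [f, u_zero]
  show c.Q.repr (c.Q 0) 0 = 1
  rw [Module.Basis.repr_self_apply, if_pos rfl]

lemma f_chain (i : ℕ) (h1 : 1 ≤ i) (h2 : i ≤ d) :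
    (c.θs 0 - c.θs ⟨i, by omega⟩) * c.f i = c.φh i * c.f (i-1) := by
  have h := congrArg (fun v => c.Q.repr v 0) (c.split i h1 h2)
  simp only [map_add, map_smul, Finsupp.add_apply, Finsupp.smul_apply, smul_eq_mul] at h
  rw [c.As_reprQ] at h
  show (c.θs 0 - c.θs ⟨i, by omega⟩) * c.f i = c.φh i * c.f (i-1)
  rw [f, f]
  rw [sub_mul]
  rw [h]
  ring

lemma f_ne_zero (i : ℕ) (h : i ≤ d) : c.f i ≠ 0 := by
  induction i with
  | zero => rw [f_zero]; exact one_ne_zero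
  | succ i ih =>
      have hch := c.f_chain (i+1) (by omega) h
      have hsimp : i + 1 - 1 = i := by omega
      rw [hsimp] at hch
      intro h0
      rw [h0, mul_zero] at hch
      rcases mul_eq_zero.mp hch.symm with h4 | h4
      · exact c.φh_ne_zero (i+1) h4
      · exact ih (by omega) h4

lemma trace_tau (i : ℕ) :
    LinearMap.trace K V ((Polynomial.aeval c.A (tauP d c.θ i)) * primIdem c.As c.θs 0)
      = c.f i :=
  trace_mul_primIdem c.Q c.As _ c.θs c.hθs c.hQ 0

lemma φ_formula (i : ℕ) (h1 : 1 ≤ i) (h2 : i ≤ d) (hlt : i < d + 1) :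
    (c.θs 0 - c.θs ⟨i, hlt⟩) * c.f i / c.f (i-1) = c.φh i := by
  rw [c.f_chain i h1 h2]
  field_simp [c.f_ne_zero (i-1) (by omega)]

end Ctx

namespace Ctx

variable {K V : Type} [Field K] [AddCommGroup V] [Module K V] {d : ℕ} (c : Ctx K V d)

noncomputable def xdiag (l : ℕ) : K :=
  if h : l < d then c.Q.repr (c.A (c.Q ⟨l+1, by omega⟩)) ⟨l, by omega⟩ else 1

lemma xdiag_ne_zero (l : ℕ) : c.xdiag l ≠ 0 := by
  unfold xdiag
  split
  · exact c.hAQdn _ _ rfl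
  · exact one_ne_zero

noncomputable def kk (j : ℕ) : K := ∏ l ∈ Finset.range j, (c.xdiag l / c.ydiag l)

lemma kk_ne_zero (j : ℕ) : c.kk j ≠ 0 :=
  Finset.prod_ne_zero_iff.mpr fun l _ =>
    div_ne_zero (c.xdiag_ne_zero l) (c.ydiag_ne_zero l)

lemma kk_succ (l : ℕ) : c.kk (l+1) * c.ydiag l = c.kk l * c.xdiag l := by
  have h : c.kk (l+1) = c.kk l * (c.xdiag l / c.ydiag l) := Finset.prod_range_succ _ l
  rw [h]
  field_simp [c.ydiag_ne_zero l]

lemma kk_symm_aux (a b : Fin (d+1)) (hb : (b:ℕ) = (a:ℕ)+1) :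
    c.kk (b:ℕ) * c.Q.repr (c.A (c.Q a)) b = c.kk (a:ℕ) * c.Q.repr (c.A (c.Q b)) a := by
  have had : (a:ℕ) < d := by have := b.isLt; omega
  have e1 : (⟨(a:ℕ), by omega⟩ : Fin (d+1)) = a := Fin.eta a _
  have e2 : (⟨(a:ℕ)+1, by omega⟩ : Fin (d+1)) = b := Fin.ext (by simp [hb])
  have hy : c.ydiag (a:ℕ) = c.Q.repr (c.A (c.Q a)) b := by
    unfold ydiag
    rw [dif_pos had, e1, e2]
  have hx : c.xdiag (a:ℕ) = c.Q.repr (c.A (c.Q b)) a := by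
    unfold xdiag
    rw [dif_pos had, e1, e2]
  rw [← hy, ← hx, hb]
  exact c.kk_succ (a:ℕ)

lemma kk_symm (i j : Fin (d+1)) :
    c.kk (j:ℕ) * c.Q.repr (c.A (c.Q i)) j = c.kk (i:ℕ) * c.Q.repr (c.A (c.Q j)) i := by
  rcases lt_trichotomy ((i:ℕ)) ((j:ℕ)) with h | h | h
  · rcases Nat.lt_or_ge ((i:ℕ)+1) (j:ℕ) with h2 | h2
    · rw [c.hAQ0 j i (Or.inr h2), c.hAQ0 i j (Or.inl h2), mul_zero, mul_zero]
    · exact c.kk_symm_aux i j (by omega)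
  · have : i = j := Fin.ext h
    rw [this]
  · rcases Nat.lt_or_ge ((j:ℕ)+1) (i:ℕ) with h2 | h2
    · rw [c.hAQ0 j i (Or.inl h2), c.hAQ0 i j (Or.inr h2), mul_zero, mul_zero]
    · exact (c.kk_symm_aux j i (by omega)).symm

noncomputable def B (x y : V) : K :=
  ∑ j : Fin (d+1), c.kk (j:ℕ) * (c.Q.repr x j * c.Q.repr y j)

lemma B_smul_left (t : K) (x y : V) : c.B (t • x) y = t * c.B x y := by
  unfold B
  rw [Finset.mul_sum]
  apply Finset.sum_congr rfl
  intro j _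
  rw [map_smul, Finsupp.smul_apply, smul_eq_mul]
  ring

lemma B_smul_right (t : K) (x y : V) : c.B x (t • y) = t * c.B x y := by
  unfold B
  rw [Finset.mul_sum]
  apply Finset.sum_congr rfl
  intro j _
  rw [map_smul, Finsupp.smul_apply, smul_eq_mul]
  ring

lemma B_add_left (x y z : V) : c.B (x + y) z = c.B x z + c.B y z := by
  unfold B
  rw [← Finset.sum_add_distrib]
  apply Finset.sum_congr rfl
  intro j _
  rw [map_add, Finsupp.add_apply]
  ring

lemma B_add_right (x y z : V) : c.B x (y + z) = c.B x y + c.B x z := by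
  unfold B
  rw [← Finset.sum_add_distrib]
  apply Finset.sum_congr rfl
  intro j _
  rw [map_add, Finsupp.add_apply]
  ring

lemma B_zero_left (y : V) : c.B 0 y = 0 := by
  unfold B
  apply Finset.sum_eq_zero
  intro j _
  simp

lemma B_zero_right (x : V) : c.B x 0 = 0 := by
  unfold B
  apply Finset.sum_eq_zero
  intro j _
  simp

lemma B_sub_right (x y z : V) : c.B x (y - z) = c.B x y - c.B x z := by
  unfold B
  rw [← Finset.sum_sub_distrib]
  apply Finset.sum_congr rfl
  intro j _
  rw [map_sub, Finsupp.sub_apply]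
  ring

lemma B_sum_left {α : Type} (s : Finset α) (g : α → V) (y : V) :
    c.B (∑ i ∈ s, g i) y = ∑ i ∈ s, c.B (g i) y := by
  classical
  induction s using Finset.induction_on with
  | empty => rw [Finset.sum_empty, Finset.sum_empty, B_zero_left]
  | insert _ _ hni ih =>
      rw [Finset.sum_insert hni, Finset.sum_insert hni, B_add_left, ih]

lemma B_sum_right {α : Type} (s : Finset α) (g : α → V) (x : V) :
    c.B x (∑ i ∈ s, g i) = ∑ i ∈ s, c.B x (g i) := by
  classical
  induction s using Finset.induction_on with
  | empty => rw [Finset.sum_empty, Finset.sum_empty, B_zero_right]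
  | insert _ _ hni ih =>
      rw [Finset.sum_insert hni, Finset.sum_insert hni, B_add_right, ih]

lemma B_A_left (x y : V) : c.B (c.A x) y = c.B x (c.A y) := by
  have hL : c.B (c.A x) y = ∑ j : Fin (d+1), ∑ i : Fin (d+1),
      c.Q.repr x i * c.Q.repr y j * (c.kk (j:ℕ) * c.Q.repr (c.A (c.Q i)) j) := by
    unfold B
    apply Finset.sum_congr rfl
    intro j _
    rw [mat_repr c.Q c.A x j, Finset.sum_mul, Finset.mul_sum]
    apply Finset.sum_congr rfl
    intro i _
    ring
  have hR : c.B x (c.A y) = ∑ i : Fin (d+1), ∑ j : Fin (d+1),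
      c.Q.repr x i * c.Q.repr y j * (c.kk (i:ℕ) * c.Q.repr (c.A (c.Q j)) i) := by
    unfold B
    apply Finset.sum_congr rfl
    intro i _
    rw [mat_repr c.Q c.A y i, Finset.mul_sum, Finset.mul_sum]
    apply Finset.sum_congr rfl
    intro j _
    ring
  rw [hL, hR, Finset.sum_comm]
  apply Finset.sum_congr rfl
  intro i _
  apply Finset.sum_congr rfl
  intro j _
  rw [c.kk_symm i j]

lemma B_As_left (x y : V) : c.B (c.As x) y = c.B x (c.As y) := by
  unfold B
  apply Finset.sum_congr rfl
  intro j _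
  rw [c.As_reprQ, c.As_reprQ]
  ring

lemma B_pow_left (k : ℕ) (x y : V) : c.B ((c.A ^ k) x) y = c.B x ((c.A ^ k) y) := by
  induction k generalizing x y with
  | zero => simp
  | succ k ih =>
      have e1 : (c.A ^ (k+1)) x = (c.A ^ k) (c.A x) := by
        rw [← Module.End.mul_apply, ← pow_succ]
      have e3 : c.A ((c.A ^ k) y) = (c.A ^ (k+1)) y := by
        rw [← Module.End.mul_apply, ← pow_succ']
      rw [e1, ih, c.B_A_left, e3]

lemma B_aeval_left (f : Polynomial K) (x y : V) :
    c.B (Polynomial.aeval c.A f x) y = c.B x (Polynomial.aeval c.A f y) := by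
  rw [Polynomial.aeval_eq_sum_range (p := f) c.A, LinearMap.sum_apply, LinearMap.sum_apply,
    c.B_sum_left, c.B_sum_right]
  apply Finset.sum_congr rfl
  intro k _
  rw [LinearMap.smul_apply, LinearMap.smul_apply, c.B_smul_left, c.B_smul_right,
    c.B_pow_left]

lemma B_P_orth (r s : Fin (d+1)) (hrs : r ≠ s) : c.B (c.P r) (c.P s) = 0 := by
  have h1 := c.B_A_left (c.P r) (c.P s)
  rw [c.hP r, c.hP s, c.B_smul_left, c.B_smul_right] at h1
  have h2 : (c.θ r - c.θ s) * c.B (c.P r) (c.P s) = 0 := by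
    rw [sub_mul, h1]
    ring
  rcases mul_eq_zero.mp h2 with h3 | h3
  · exact absurd (sub_eq_zero.mp h3) (fun hh => hrs (c.hθ hh))
  · exact h3

noncomputable def mm (r : Fin (d+1)) : K := c.B (c.P r) (c.P r)

lemma B_expand_P (x y : V) :
    c.B x y = ∑ r : Fin (d+1), c.P.repr x r * c.P.repr y r * c.mm r := by
  conv_lhs => rw [← c.P.sum_repr x, c.B_sum_left]
  apply Finset.sum_congr rfl
  intro r _
  rw [c.B_smul_left]
  conv_lhs => rw [← c.P.sum_repr y, c.B_sum_right]
  rw [Finset.mul_sum, Finset.sum_eq_single r]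
  · rw [c.B_smul_right, mm]
    ring
  · intro s _ hsr
    rw [c.B_smul_right, c.B_P_orth r s (by exact fun hh => hsr hh.symm), mul_zero, mul_zero]
  · simp

lemma B_P_basis (r : Fin (d+1)) (x : V) :
    c.B (c.P r) x = c.P.repr x r * c.mm r := by
  rw [c.B_expand_P, Finset.sum_eq_single r]
  · rw [Module.Basis.repr_self_apply, if_pos rfl, one_mul]
  · intro s _ hsr
    rw [Module.Basis.repr_self_apply, if_neg (fun hh => hsr hh.symm), zero_mul, zero_mul]
  · simp

lemma mm_ne_zero (r : Fin (d+1)) : c.mm r ≠ 0 := by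
  intro h0
  have hex : ∃ j0 : Fin (d+1), c.Q.repr (c.P r) j0 ≠ 0 := by
    by_contra hall
    push_neg at hall
    have : c.Q.repr (c.P r) = 0 := by ext j; exact hall j
    exact c.P.ne_zero r ((c.Q.repr.map_eq_zero_iff).mp this)
  obtain ⟨j0, hj0⟩ := hex
  have h1 : c.B (c.P r) (c.Q j0) = c.kk (j0:ℕ) * c.Q.repr (c.P r) j0 := by
    unfold B
    rw [Finset.sum_eq_single j0]
    · rw [Module.Basis.repr_self_apply, if_pos rfl, mul_one]
    · intro s _ hs
      rw [Module.Basis.repr_self_apply, if_neg (fun hh => hs hh.symm), mul_zero, mul_zero]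
    · simp
  rw [c.B_P_basis r (c.Q j0), h0, mul_zero] at h1
  exact (mul_ne_zero (c.kk_ne_zero _) hj0) h1.symm

end Ctx

namespace LeonardSystem

variable {K : Type} [Field K] {V : Type} [AddCommGroup V] [Module K V] {d : ℕ}
  (L : LeonardSystem K V d)

noncomputable def pvec : Fin (d+1) → V :=
  fun i => ((L.hEig i).exists_hasEigenvector).choose

lemma pvec_hasEig (i : Fin (d+1)) :
    Module.End.HasEigenvector L.A (L.θ i) (L.pvec i) :=
  ((L.hEig i).exists_hasEigenvector).choose_spec

noncomputable def qvec : Fin (d+1) → V :=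
  fun i => ((L.hEigs i).exists_hasEigenvector).choose

lemma qvec_hasEig (i : Fin (d+1)) :
    Module.End.HasEigenvector L.As (L.θs i) (L.qvec i) :=
  ((L.hEigs i).exists_hasEigenvector).choose_spec

noncomputable def Pb : Module.Basis (Fin (d+1)) K V :=
  basisOfLinearIndependentOfCardEqFinrank
    (Module.End.eigenvectors_linearIndependent' L.A L.θ L.θ_inj _ (fun i => L.pvec_hasEig i))
    (by simp [L.hdim])

lemma Pb_eig (i : Fin (d+1)) : L.A (L.Pb i) = L.θ i • L.Pb i := by
  rw [Pb, coe_basisOfLinearIndependentOfCardEqFinrank]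
  exact (L.pvec_hasEig i).apply_eq_smul

noncomputable def Qb : Module.Basis (Fin (d+1)) K V :=
  basisOfLinearIndependentOfCardEqFinrank
    (Module.End.eigenvectors_linearIndependent' L.As L.θs L.θs_inj _ (fun i => L.qvec_hasEig i))
    (by simp [L.hdim])

lemma Qb_eig (i : Fin (d+1)) : L.As (L.Qb i) = L.θs i • L.Qb i := by
  rw [Qb, coe_basisOfLinearIndependentOfCardEqFinrank]
  exact (L.qvec_hasEig i).apply_eq_smul

noncomputable def ctx1 : Ctx K V d where
  A := L.A
  As := L.As
  θ := L.θ
  θs := L.θs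
  P := L.Pb
  Q := L.Qb
  hθ := L.θ_inj
  hθs := L.θs_inj
  hP := L.Pb_eig
  hQ := L.Qb_eig
  hAQ0 := fun i j h =>
    (sandwich_eq_zero_iff L.Qb L.As L.A L.θs L.θs_inj L.Qb_eig i j).mp (L.hFars i j h)
  hAQup := fun i j h h0 =>
    L.hNears i j (Or.inr h)
      ((sandwich_eq_zero_iff L.Qb L.As L.A L.θs L.θs_inj L.Qb_eig i j).mpr h0)
  hAQdn := fun i j h h0 =>
    L.hNears i j (Or.inl h)
      ((sandwich_eq_zero_iff L.Qb L.As L.A L.θs L.θs_inj L.Qb_eig i j).mpr h0)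
  hAsP0 := fun i j h =>
    (sandwich_eq_zero_iff L.Pb L.A L.As L.θ L.θ_inj L.Pb_eig i j).mp (L.hFar i j h)
  hAsPdn := fun i j h h0 =>
    L.hNear i j (Or.inl h)
      ((sandwich_eq_zero_iff L.Pb L.A L.As L.θ L.θ_inj L.Pb_eig i j).mpr h0)

lemma rev_repr (x : V) (i : Fin (d+1)) :
    (L.Pb.reindex Fin.revPerm).repr x i = L.Pb.repr x i.rev := by
  rw [Module.Basis.repr_reindex_apply]
  rfl

lemma rev_apply (i : Fin (d+1)) :
    (L.Pb.reindex Fin.revPerm) i = L.Pb i.rev := by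
  rw [Module.Basis.reindex_apply]
  rfl

noncomputable def ctx2 : Ctx K V d where
  A := L.A
  As := L.As
  θ := fun k => L.θ k.rev
  θs := L.θs
  P := L.Pb.reindex Fin.revPerm
  Q := L.Qb
  hθ := fun a b hab => Fin.rev_injective (L.θ_inj hab)
  hθs := L.θs_inj
  hP := fun i => by rw [L.rev_apply]; exact L.Pb_eig i.rev
  hQ := L.Qb_eig
  hAQ0 := fun i j h =>
    (sandwich_eq_zero_iff L.Qb L.As L.A L.θs L.θs_inj L.Qb_eig i j).mp (L.hFars i j h)
  hAQup := fun i j h h0 =>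
    L.hNears i j (Or.inr h)
      ((sandwich_eq_zero_iff L.Qb L.As L.A L.θs L.θs_inj L.Qb_eig i j).mpr h0)
  hAQdn := fun i j h h0 =>
    L.hNears i j (Or.inl h)
      ((sandwich_eq_zero_iff L.Qb L.As L.A L.θs L.θs_inj L.Qb_eig i j).mpr h0)
  hAsP0 := fun i j h => by
    rw [L.rev_apply, L.rev_repr]
    have hc : ((i.rev:ℕ)+1 < (j.rev:ℕ) ∨ (j.rev:ℕ)+1 < (i.rev:ℕ)) := by
      have hvi := Fin.val_rev i
      have hvj := Fin.val_rev j
      have hi2 := i.isLt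
      have hj2 := j.isLt
      omega
    exact (sandwich_eq_zero_iff L.Pb L.A L.As L.θ L.θ_inj L.Pb_eig i.rev j.rev).mp
      (L.hFar i.rev j.rev hc)
  hAsPdn := fun i j h h0 => by
    rw [L.rev_apply, L.rev_repr] at h0
    have hc : ((j.rev:ℕ)+1 = (i.rev:ℕ)) := by
      have hvi := Fin.val_rev i
      have hvj := Fin.val_rev j
      have hi2 := i.isLt
      have hj2 := j.isLt
      omega
    exact L.hNear i.rev j.rev (Or.inr hc)
      ((sandwich_eq_zero_iff L.Pb L.A L.As L.θ L.θ_inj L.Pb_eig i.rev j.rev).mpr h0)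

end LeonardSystem

namespace LeonardSystem

variable {K : Type} [Field K] {V : Type} [AddCommGroup V] [Module K V] {d : ℕ}
  (L : LeonardSystem K V d)

noncomputable def zeta : V := L.Qb (Fin.last d)

lemma As_zeta : L.ctx1.As L.zeta = L.ctx1.θs (Fin.last d) • L.zeta :=
  L.Qb_eig (Fin.last d)

lemma Bzeta_chain (j : ℕ) (h1 : 1 ≤ j) (h2 : j ≤ d) :
    (L.ctx1.θs (Fin.last d) - L.ctx1.θs ⟨j, by omega⟩) * L.ctx1.B L.zeta (L.ctx1.u j)
      = L.ctx1.φh j * L.ctx1.B L.zeta (L.ctx1.u (j-1)) := by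
  have hs := L.ctx1.split j h1 h2
  have h3 : L.ctx1.B L.zeta (L.ctx1.As (L.ctx1.u j))
      = L.ctx1.θs (Fin.last d) * L.ctx1.B L.zeta (L.ctx1.u j) := by
    rw [← L.ctx1.B_As_left, L.As_zeta, L.ctx1.B_smul_left]
  rw [hs, L.ctx1.B_add_right, L.ctx1.B_smul_right, L.ctx1.B_smul_right] at h3
  linear_combination -h3

lemma Bzeta_u (i : ℕ) (hi : i < d) : L.ctx1.B L.zeta (L.ctx1.u i) = 0 := by
  have down : ∀ k, k ≤ d - 1 → L.ctx1.B L.zeta (L.ctx1.u (d-1-k)) = 0 := by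
    intro k
    induction k with
    | zero =>
        intro _
        have h0 := L.Bzeta_chain d (by omega) (le_refl d)
        have he : L.ctx1.θs (Fin.last d) - L.ctx1.θs ⟨d, by omega⟩ = 0 := by
          rw [show (⟨d, by omega⟩ : Fin (d+1)) = Fin.last d from rfl, sub_self]
        rw [he, zero_mul] at h0
        have h4 := (mul_eq_zero.mp h0.symm).resolve_left (L.ctx1.φh_ne_zero d)
        rw [show d - 1 - 0 = d - 1 from by omega]
        exact h4
    | succ k ih =>
        intro hk
        have hprev := ih (by omega)
        have hj1 : 1 ≤ d - 1 - k := by omega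
        have h0 := L.Bzeta_chain (d-1-k) hj1 (by omega)
        rw [hprev, mul_zero] at h0
        have h4 := (mul_eq_zero.mp h0.symm).resolve_left (L.ctx1.φh_ne_zero _)
        rw [show d - 1 - (k+1) = d - 1 - k - 1 from by omega]
        exact h4
  have h5 := down (d - 1 - i) (by omega)
  rw [show d - 1 - (d - 1 - i) = i from by omega] at h5
  exact h5

lemma Bzeta_poly : ∀ (h : Polynomial K), h.natDegree < d →
    L.ctx1.B L.zeta (Polynomial.aeval L.A h L.ctx1.ξ) = 0 := by
  suffices hN : ∀ N : ℕ, ∀ h : Polynomial K, h.natDegree ≤ N → h.natDegree < d →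
      L.ctx1.B L.zeta (Polynomial.aeval L.A h L.ctx1.ξ) = 0 by
    intro h hh
    exact hN h.natDegree h (le_refl _) hh
  intro N
  induction N with
  | zero =>
      intro h h0 hd0
      obtain ⟨a, rfl⟩ := Polynomial.natDegree_eq_zero.mp (Nat.le_zero.mp h0)
      rw [Polynomial.aeval_C, Module.algebraMap_end_apply, L.ctx1.B_smul_right]
      have : L.ctx1.B L.zeta L.ctx1.ξ = 0 := by
        have := L.Bzeta_u 0 (by omega)
        rw [L.ctx1.u_zero] at this
        exact this
      rw [this, mul_zero]
  | succ N ihN =>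
      intro h h0 hdlt
      by_cases hle : h.natDegree ≤ N
      · exact ihN h hle hdlt
      · have hdeg : h.natDegree = N + 1 := by omega
        have hne : h ≠ 0 := fun hh => by rw [hh] at hdeg; simp at hdeg
        have hlc : h.leadingCoeff ≠ 0 := Polynomial.leadingCoeff_ne_zero.mpr hne
        set q := Polynomial.C h.leadingCoeff * tauP d L.θ (N+1) with hq
        have htaudeg : (tauP d L.θ (N+1)).natDegree = N + 1 :=
          tauP_natDegree L.θ (N+1) (by omega)
        have hqc : ∀ m, N + 1 < m → q.coeff m = 0 := by
          intro m hm
          rw [hq, Polynomial.coeff_C_mul,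
            Polynomial.coeff_eq_zero_of_natDegree_lt (by omega : (tauP d L.θ (N+1)).natDegree < m),
            mul_zero]
        have hqtop : q.coeff (N+1) = h.leadingCoeff := by
          rw [hq, Polynomial.coeff_C_mul]
          have : (tauP d L.θ (N+1)).coeff (N+1) = 1 := by
            have hm := tauP_monic L.θ (N+1) (d := d)
            have := hm.coeff_natDegree
            rw [htaudeg] at this
            exact this
          rw [this, mul_one]
        have hsub : (h - q).natDegree ≤ N := by
          apply Polynomial.natDegree_le_iff_coeff_eq_zero.mpr
          intro m hm
          rw [Polynomial.coeff_sub]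
          rcases Nat.lt_or_ge (N+1) m with hm2 | hm2
          · rw [Polynomial.coeff_eq_zero_of_natDegree_lt (by omega), hqc m hm2, sub_zero]
          · have hm3 : m = N + 1 := by omega
            rw [hm3, hqtop, ← hdeg, Polynomial.coeff_natDegree, sub_self]
        have hsplit : h = (h - q) + q := by ring
        rw [hsplit, map_add, LinearMap.add_apply, L.ctx1.B_add_right,
          ihN (h - q) hsub (by omega)]
        rw [hq, map_mul, Polynomial.aeval_C, Module.End.mul_apply,
          Module.algebraMap_end_apply, L.ctx1.B_smul_right]
        have hBu : L.ctx1.B L.zeta (L.ctx1.u (N+1)) = 0 := L.Bzeta_u (N+1) (by omega)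
        have : Polynomial.aeval L.A (tauP d L.θ (N+1)) L.ctx1.ξ = L.ctx1.u (N+1) := rfl
        rw [this, hBu, mul_zero, zero_add]

end LeonardSystem

namespace LeonardSystem

variable {K : Type} [Field K] {V : Type} [AddCommGroup V] [Module K V] {d : ℕ}
  (L : LeonardSystem K V d)

lemma ctx1_θ : L.ctx1.θ = L.θ := rfl

lemma w_reprP (i : ℕ) (hi : i ≤ d) (s : Fin (d+1)) :
    L.ctx1.P.repr (L.ctx2.u i) s = (etaP d L.θ i).eval (L.θ s) * L.ctx1.ε s := by
  have h1 : L.ctx2.P.repr (L.ctx2.u i) s.rev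
      = (tauP d L.ctx2.θ i).eval (L.ctx2.θ s.rev) * L.ctx2.ε s.rev := L.ctx2.u_reprP i s.rev
  have h2 : L.ctx2.P.repr (L.ctx2.u i) s.rev = L.ctx1.P.repr (L.ctx2.u i) s := by
    have h := L.rev_repr (L.ctx2.u i) s.rev
    rw [Fin.rev_rev] at h
    exact h
  have h3 : tauP d L.ctx2.θ i = etaP d L.θ i := tauP_rev L.θ i hi
  have h4 : L.ctx2.θ s.rev = L.θ s := by
    show L.θ s.rev.rev = L.θ s
    rw [Fin.rev_rev]
  have h5 : L.ctx2.ε s.rev = L.ctx1.ε s := by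
    show L.ctx2.P.repr L.ctx2.ξ s.rev = L.ctx1.P.repr L.ctx1.ξ s
    have h := L.rev_repr L.ctx1.ξ s.rev
    rw [Fin.rev_rev] at h
    exact h
  rw [← h2, h1, h3, h4, h5]

lemma B_wu_zero (i j : ℕ) (hi : i ≤ d) (hj : j ≤ d) (hd : d < i + j) :
    L.ctx1.B (L.ctx2.u i) (L.ctx1.u j) = 0 := by
  rw [L.ctx1.B_expand_P]
  apply Finset.sum_eq_zero
  intro s _
  rcases Nat.lt_or_ge (s:ℕ) j with hs | hs
  · rw [L.ctx1.u_reprP, L.ctx1_θ, tauP_eval_eq_zero L.θ hs]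
    ring
  · rw [L.w_reprP i hi s, etaP_eval_eq_zero L.θ (by omega : d - i < (s:ℕ))]
    ring

noncomputable def gj (j : ℕ) : K := L.ctx1.B (L.ctx2.u (d - j)) (L.ctx1.u j)

lemma gj_rec (j : ℕ) (h1 : 1 ≤ j) (h2 : j ≤ d) :
    L.ctx2.φh (d+1-j) * L.gj j = L.ctx1.φh j * L.gj (j-1) := by
  have hi1 : 1 ≤ d+1-j := by omega
  have hi2 : d+1-j ≤ d := by omega
  have hs2 := L.ctx2.split (d+1-j) hi1 hi2
  have hs1 := L.ctx1.split j h1 h2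
  have hB := L.ctx1.B_As_left (L.ctx2.u (d+1-j)) (L.ctx1.u j)
  rw [show L.ctx1.As (L.ctx2.u (d+1-j)) = L.ctx2.As (L.ctx2.u (d+1-j)) from rfl, hs2,
    hs1] at hB
  rw [L.ctx1.B_add_left, L.ctx1.B_smul_left, L.ctx1.B_smul_left,
    L.ctx1.B_add_right, L.ctx1.B_smul_right, L.ctx1.B_smul_right] at hB
  have hz : L.ctx1.B (L.ctx2.u (d+1-j)) (L.ctx1.u j) = 0 :=
    L.B_wu_zero _ _ (by omega) h2 (by omega)
  rw [hz] at hB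
  unfold gj
  rw [show d - (j-1) = d+1-j from by omega]
  rw [show d+1-j-1 = d-j from by omega] at hB
  linear_combination hB

lemma gj_chain (j : ℕ) (hj : j ≤ d) :
    L.gj j * (∏ k ∈ Finset.Icc 1 j, L.ctx2.φh (d+1-k))
      = L.gj 0 * (∏ k ∈ Finset.Icc 1 j, L.ctx1.φh k) := by
  induction j with
  | zero => simp
  | succ j ih =>
      have ihj := ih (by omega)
      rw [Finset.prod_Icc_succ_top (by omega), Finset.prod_Icc_succ_top (by omega)]
      have hrec := L.gj_rec (j+1) (by omega) hj
      rw [show j + 1 - 1 = j from rfl] at hrec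
      linear_combination (∏ k ∈ Finset.Icc 1 j, L.ctx2.φh (d+1-k)) * hrec
        + L.ctx1.φh (j+1) * ihj

lemma gj_val (j : Fin (d+1)) :
    L.gj (j:ℕ) = ((tauP d L.θ (j:ℕ)).eval (L.θ j) * (etaP d L.θ (d-(j:ℕ))).eval (L.θ j))
      * (L.ctx1.ε j * L.ctx1.ε j * L.ctx1.mm j) := by
  unfold gj
  rw [L.ctx1.B_expand_P, Finset.sum_eq_single j]
  · rw [L.w_reprP (d-(j:ℕ)) (by omega) j, L.ctx1.u_reprP, L.ctx1_θ]
    ring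
  · intro s _ hsj
    rcases Nat.lt_or_ge (s:ℕ) (j:ℕ) with hs | hs
    · rw [L.ctx1.u_reprP, L.ctx1_θ, tauP_eval_eq_zero L.θ hs]
      ring
    · have hsv : (s:ℕ) ≠ (j:ℕ) := fun h => hsj (Fin.ext h)
      have hjlt := j.isLt
      rw [L.w_reprP (d-(j:ℕ)) (by omega) s,
        etaP_eval_eq_zero L.θ (by omega : d - (d-(j:ℕ)) < (s:ℕ))]
      ring
  · simp

lemma phi_eq (i : ℕ) (h1 : 1 ≤ i) (h2 : i ≤ d) : L.φ i = L.ctx1.φh i := by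
  unfold LeonardSystem.φ
  rw [dif_pos (by omega : i < d + 1)]
  have t1 : LinearMap.trace K V (L.tau i * L.Es 0) = L.ctx1.f i := L.ctx1.trace_tau i
  have t2 : LinearMap.trace K V (L.tau (i-1) * L.Es 0) = L.ctx1.f (i-1) :=
    L.ctx1.trace_tau (i-1)
  rw [t1, t2]
  exact L.ctx1.φ_formula i h1 h2 (by omega)

lemma varphi_eq (i : ℕ) (h1 : 1 ≤ i) (h2 : i ≤ d) : L.ϕ i = L.ctx2.φh i := by
  unfold LeonardSystem.ϕ
  rw [dif_pos (by omega : i < d + 1)]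
  have h3 : tauP d L.ctx2.θ i = etaP d L.θ i := tauP_rev L.θ i h2
  have h4 : tauP d L.ctx2.θ (i-1) = etaP d L.θ (i-1) := tauP_rev L.θ (i-1) (by omega)
  have e1 : L.eta i = Polynomial.aeval L.ctx2.A (tauP d L.ctx2.θ i) := by
    show Polynomial.aeval L.A (etaP d L.θ i) = _
    rw [h3]
    rfl
  have e2 : L.eta (i-1) = Polynomial.aeval L.ctx2.A (tauP d L.ctx2.θ (i-1)) := by
    show Polynomial.aeval L.A (etaP d L.θ (i-1)) = _
    rw [h4]
    rfl
  rw [e1, e2]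
  have t1 : LinearMap.trace K V
      (Polynomial.aeval L.ctx2.A (tauP d L.ctx2.θ i) * L.Es 0) = L.ctx2.f i :=
    L.ctx2.trace_tau i
  have t2 : LinearMap.trace K V
      (Polynomial.aeval L.ctx2.A (tauP d L.ctx2.θ (i-1)) * L.Es 0) = L.ctx2.f (i-1) :=
    L.ctx2.trace_tau (i-1)
  rw [t1, t2]
  exact L.ctx2.φ_formula i h1 h2 (by omega)

lemma pair_rel (r : Fin (d+1)) (hr : r ≠ 0) :
    (∏ s ∈ (Finset.univ.erase (0 : Fin (d+1))).erase r, (L.θ 0 - L.θ s))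
        * (L.ctx1.P.repr L.zeta 0 * (L.ctx1.ε 0 * L.ctx1.mm 0))
      + (∏ s ∈ (Finset.univ.erase (0 : Fin (d+1))).erase r, (L.θ r - L.θ s))
        * (L.ctx1.P.repr L.zeta r * (L.ctx1.ε r * L.ctx1.mm r)) = 0 := by
  set E := (Finset.univ.erase (0 : Fin (d+1))).erase r with hE
  set g : Polynomial K := ∏ s ∈ E, (X - C (L.θ s)) with hg
  have hrv : (r:ℕ) ≠ 0 := fun h => hr (Fin.ext (by simp [h]))
  have hd1 : 1 ≤ d := by have := r.isLt; omega
  have hcard : E.card = d - 1 := by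
    rw [hE, Finset.card_erase_of_mem (Finset.mem_erase.mpr ⟨hr, Finset.mem_univ r⟩),
      Finset.card_erase_of_mem (Finset.mem_univ 0), Finset.card_univ, Fintype.card_fin]
    omega
  have hdeg : g.natDegree = d - 1 := by
    rw [hg, natDegree_prod_of_monic _ _ (fun s _ => monic_X_sub_C _)]
    simp [natDegree_X_sub_C, hcard]
  have h0 := L.Bzeta_poly g (by omega)
  rw [L.ctx1.B_expand_P] at h0
  have hterm : ∀ s : Fin (d+1), L.ctx1.P.repr (Polynomial.aeval L.A g L.ctx1.ξ) s
      = g.eval (L.θ s) * L.ctx1.ε s := fun s => L.ctx1.aeval_reprP g L.ctx1.ξ s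
  rw [Finset.sum_congr rfl (fun s _ => by rw [hterm s])] at h0
  have hev : ∀ t : K, g.eval t = ∏ s ∈ E, (t - L.θ s) := by
    intro t
    rw [hg, Polynomial.eval_prod]
    simp
  have hsub : ∑ s ∈ ({0, r} : Finset (Fin (d+1))),
      L.ctx1.P.repr L.zeta s * (g.eval (L.θ s) * L.ctx1.ε s) * L.ctx1.mm s
      = ∑ s : Fin (d+1),
      L.ctx1.P.repr L.zeta s * (g.eval (L.θ s) * L.ctx1.ε s) * L.ctx1.mm s := by
    apply Finset.sum_subset (Finset.subset_univ _)
    intro s _ hs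
    simp only [Finset.mem_insert, Finset.mem_singleton] at hs
    push_neg at hs
    have hsE : s ∈ E := Finset.mem_erase.mpr ⟨hs.2, Finset.mem_erase.mpr ⟨hs.1, Finset.mem_univ s⟩⟩
    rw [hev]
    rw [Finset.prod_eq_zero hsE (sub_self (L.θ s))]
    ring
  rw [← hsub, Finset.sum_pair (fun h => hr h.symm)] at h0
  rw [hev, hev] at h0
  linear_combination h0

noncomputable def Psi (r : ℕ) : K := ∏ k ∈ Finset.Icc 1 r, L.ctx1.φh k

noncomputable def Phi (r : ℕ) : K := ∏ k ∈ Finset.Icc 1 r, L.ctx2.φh (d+1-k)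

lemma Psi_ne_zero (r : ℕ) : L.Psi r ≠ 0 :=
  Finset.prod_ne_zero_iff.mpr fun k _ => L.ctx1.φh_ne_zero k

lemma Phi_ne_zero (r : ℕ) : L.Phi r ≠ 0 :=
  Finset.prod_ne_zero_iff.mpr fun k _ => L.ctx2.φh_ne_zero _

lemma T_rel (r : Fin (d+1)) :
    L.ctx1.P.repr L.zeta r * L.ctx1.ε 0 * L.Psi (r:ℕ)
      = L.ctx1.P.repr L.zeta 0 * L.ctx1.ε r * L.Phi (r:ℕ) := by
  by_cases hr : r = 0
  · subst hr
    simp [Psi, Phi]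
  · set E := (Finset.univ.erase (0 : Fin (d+1))).erase r with hE
    set G0 := ∏ s ∈ E, (L.θ 0 - L.θ s) with hG0
    set Gr := ∏ s ∈ E, (L.θ r - L.θ s) with hGr
    have hrv : (r:ℕ) ≠ 0 := fun h => hr (Fin.ext (by simp [h]))
    have hrlt := r.isLt
    have hpair := L.pair_rel r hr
    have echain := L.gj_chain (r:ℕ) (by omega)
    have evr := L.gj_val r
    have ev0 := L.gj_val 0
    rw [show ((0 : Fin (d+1)) : ℕ) = 0 from rfl] at ev0
    rw [tauP_zero, Polynomial.eval_one, one_mul] at ev0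
    rw [show d - 0 = d from rfl] at ev0
    have hπ0 : (etaP d L.θ d).eval (L.θ 0) = (L.θ 0 - L.θ r) * G0 := by
      rw [etaP_eval]
      have hfe : Finset.univ.filter (fun s : Fin (d+1) => d - d < (s:ℕ))
          = Finset.univ.erase (0 : Fin (d+1)) := by
        ext s
        simp only [Finset.mem_filter, Finset.mem_univ, true_and, Finset.mem_erase,
          and_true, Nat.sub_self]
        constructor
        · intro h heq
          rw [heq] at h
          simp at h
        · intro h
          have h2 : (s:ℕ) ≠ 0 := fun hh => h (Fin.ext (by simp [hh]))
          omega
      rw [hfe, ← Finset.mul_prod_erase _ _ (Finset.mem_erase.mpr ⟨hr, Finset.mem_univ r⟩),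
        ← hE, ← hG0]
    have hdisj : Disjoint (Finset.univ.filter (fun s : Fin (d+1) => (s:ℕ) < (r:ℕ)))
        (Finset.univ.filter (fun s : Fin (d+1) => (r:ℕ) < (s:ℕ))) := by
      apply Finset.disjoint_left.mpr
      intro s hs1 hs2
      simp only [Finset.mem_filter] at hs1 hs2
      omega
    have hsplit : (Finset.univ.filter (fun s : Fin (d+1) => (s:ℕ) < (r:ℕ)))
        ∪ (Finset.univ.filter (fun s : Fin (d+1) => (r:ℕ) < (s:ℕ)))
        = Finset.univ.erase r := by
      ext s
      simp only [Finset.mem_union, Finset.mem_filter, Finset.mem_univ, true_and,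
        Finset.mem_erase, and_true]
      constructor
      · rintro (h | h) heq
        · rw [heq] at h; omega
        · rw [heq] at h; omega
      · intro h
        have h2 : (s:ℕ) ≠ (r:ℕ) := fun hh => h (Fin.ext hh)
        omega
    have hπr : (tauP d L.θ (r:ℕ)).eval (L.θ r) * (etaP d L.θ (d - (r:ℕ))).eval (L.θ r)
        = (L.θ r - L.θ 0) * Gr := by
      rw [tauP_eval, etaP_eval]
      simp only [show d - (d - (r:ℕ)) = (r:ℕ) from by omega]
      rw [← Finset.prod_union hdisj, hsplit,
        ← Finset.mul_prod_erase _ _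
          (Finset.mem_erase.mpr ⟨Ne.symm hr, Finset.mem_univ (0 : Fin (d+1))⟩),
        Finset.erase_right_comm, ← hE, ← hGr]
    have hstar : (L.θ r - L.θ 0) * Gr * (L.ctx1.ε r * L.ctx1.ε r * L.ctx1.mm r) * L.Phi (r:ℕ)
        = (L.θ 0 - L.θ r) * G0 * (L.ctx1.ε 0 * L.ctx1.ε 0 * L.ctx1.mm 0) * L.Psi (r:ℕ) := by
      unfold Phi Psi
      rw [evr, ev0, hπ0, hπr] at echain
      linear_combination echain
    have hG0ne : G0 ≠ 0 := by
      rw [hG0]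
      apply Finset.prod_ne_zero_iff.mpr
      intro s hs
      have hs0 : s ≠ 0 := (Finset.mem_erase.mp (Finset.mem_erase.mp hs).2).1
      exact sub_ne_zero.mpr fun hh => hs0 (L.θ_inj hh).symm
    have htne : L.θ 0 - L.θ r ≠ 0 := sub_ne_zero.mpr fun hh => hr (L.θ_inj hh).symm
    have hcan : (L.θ 0 - L.θ r) * G0 * (L.ctx1.ε 0 * L.ctx1.mm 0) ≠ 0 :=
      mul_ne_zero (mul_ne_zero htne hG0ne)
        (mul_ne_zero (L.ctx1.eps_ne_zero 0) (L.ctx1.mm_ne_zero 0))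
    apply mul_left_cancel₀ hcan
    linear_combination (-(L.ctx1.P.repr L.zeta r)) * hstar
      + (-((L.θ 0 - L.θ r) * L.ctx1.ε r * L.Phi (r:ℕ))) * hpair

lemma zetaP0_ne_zero : L.ctx1.P.repr L.zeta 0 ≠ 0 := by
  intro h0
  have hz : ∀ r : Fin (d+1), L.ctx1.P.repr L.zeta r = 0 := by
    intro r
    have hT := L.T_rel r
    rw [h0, zero_mul, zero_mul] at hT
    rcases mul_eq_zero.mp hT with h | h
    · rcases mul_eq_zero.mp h with h | h
      · exact h
      · exact absurd h (L.ctx1.eps_ne_zero 0)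
    · exact absurd h (L.Psi_ne_zero _)
  have hrepr : L.ctx1.P.repr L.zeta = 0 := by
    ext r
    exact hz r
  exact (L.Qb.ne_zero (Fin.last d)) ((L.ctx1.P.repr.map_eq_zero_iff).mp hrepr)

lemma Sc_eq (r : Fin (d+1)) :
    (∏ k ∈ Finset.Icc (d - (r:ℕ) + 1) d, L.ϕ k) / (∏ k ∈ Finset.Icc 1 (r:ℕ), L.φ k)
      = L.Phi (r:ℕ) / L.Psi (r:ℕ) := by
  have hrlt := r.isLt
  have h1 : ∏ k ∈ Finset.Icc 1 (r:ℕ), L.φ k = L.Psi (r:ℕ) := by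
    unfold Psi
    apply Finset.prod_congr rfl
    intro k hk
    have hk2 := Finset.mem_Icc.mp hk
    exact L.phi_eq k hk2.1 (by omega)
  have h2 : ∏ k ∈ Finset.Icc (d - (r:ℕ) + 1) d, L.ϕ k = L.Phi (r:ℕ) := by
    unfold Phi
    apply (Finset.prod_nbij' (fun k => d + 1 - k) (fun k => d + 1 - k) ?_ ?_ ?_ ?_ ?_).symm
    · intro k hk
      simp only [Finset.mem_Icc] at hk ⊢
      omega
    · intro k hk
      simp only [Finset.mem_Icc] at hk ⊢
      omega
    · intro k hk
      simp only [Finset.mem_Icc] at hk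
      show d + 1 - (d + 1 - k) = k
      omega
    · intro k hk
      simp only [Finset.mem_Icc] at hk
      show d + 1 - (d + 1 - k) = k
      omega
    · intro k hk
      have hk2 := Finset.mem_Icc.mp hk
      show L.ctx2.φh (d+1-k) = L.ϕ (d+1-k)
      exact (L.varphi_eq (d+1-k) (by omega) (by omega)).symm
  rw [h1, h2]

lemma E_apply_xi (r : Fin (d+1)) : L.E r L.ctx1.ξ = L.ctx1.ε r • L.ctx1.P r :=
  primIdem_apply L.Pb L.A L.θ L.θ_inj L.Pb_eig r L.ctx1.ξ

lemma S_xi : L.S L.ctx1.ξ = (L.ctx1.ε 0 / L.ctx1.P.repr L.zeta 0) • L.zeta := by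
  have hz0 := L.zetaP0_ne_zero
  apply L.ctx1.P.ext_elem
  intro s
  have hRHS : L.ctx1.P.repr ((L.ctx1.ε 0 / L.ctx1.P.repr L.zeta 0) • L.zeta) s
      = (L.ctx1.ε 0 / L.ctx1.P.repr L.zeta 0) * L.ctx1.P.repr L.zeta s := by
    rw [map_smul, Finsupp.smul_apply, smul_eq_mul]
  rw [hRHS]
  have hS : L.S L.ctx1.ξ = ∑ r : Fin (d+1),
      ((∏ k ∈ Finset.Icc (d - (r:ℕ) + 1) d, L.ϕ k) / (∏ k ∈ Finset.Icc 1 (r:ℕ), L.φ k))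
        • (L.ctx1.ε r • L.ctx1.P r) := by
    unfold LeonardSystem.S
    rw [LinearMap.sum_apply]
    apply Finset.sum_congr rfl
    intro r _
    rw [LinearMap.smul_apply, L.E_apply_xi]
  rw [hS, map_sum, Finset.sum_apply']
  rw [Finset.sum_eq_single s]
  · rw [map_smul, map_smul, Finsupp.smul_apply, Finsupp.smul_apply, Module.Basis.repr_self_apply,
      if_pos rfl, smul_eq_mul, smul_eq_mul, mul_one, L.Sc_eq s]
    have hT := L.T_rel s
    field_simp [L.Psi_ne_zero ((s:ℕ))]
    linear_combination -hT
  · intro r _ hrs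
    rw [map_smul, map_smul, Finsupp.smul_apply, Finsupp.smul_apply, Module.Basis.repr_self_apply,
      if_neg hrs, smul_eq_mul, smul_eq_mul, mul_zero, mul_zero]
  · simp

lemma Es_apply (i : Fin (d+1)) (x : V) : L.Es i x = L.Qb.repr x i • L.Qb i :=
  primIdem_apply L.Qb L.As L.θs L.θs_inj L.Qb_eig i x

lemma Es_range (i : Fin (d+1)) :
    LinearMap.range (L.Es i) = Submodule.span K {L.Qb i} := by
  apply le_antisymm
  · rintro x ⟨y, rfl⟩
    rw [L.Es_apply]
    exact Submodule.smul_mem _ _ (Submodule.mem_span_singleton_self _)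
  · rw [Submodule.span_le, Set.singleton_subset_iff]
    exact ⟨L.Qb i, by rw [L.Es_apply, Module.Basis.repr_self_apply, if_pos rfl, one_smul]⟩

lemma S_mem_adjoin : L.S ∈ Algebra.adjoin K {L.A} := by
  rw [Algebra.adjoin_singleton_eq_range_aeval, AlgHom.mem_range]
  refine ⟨∑ r : Fin (d+1), Polynomial.C
      ((∏ k ∈ Finset.Icc (d - (r:ℕ) + 1) d, L.ϕ k) / (∏ k ∈ Finset.Icc 1 (r:ℕ), L.φ k))
      * (∏ j ∈ Finset.univ.erase r, ((L.θ r - L.θ j)⁻¹ • (X - C (L.θ j)))), ?_⟩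
  rw [map_sum]
  unfold LeonardSystem.S
  apply Finset.sum_congr rfl
  intro r _
  rw [map_mul, Polynomial.aeval_C, Algebra.smul_def]
  rfl

lemma aeval_eq_zero_of_xi (f : Polynomial K) (hf : Polynomial.aeval L.A f L.ctx1.ξ = 0) :
    Polynomial.aeval L.A f = 0 := by
  have hz : ∀ r, f.eval (L.θ r) = 0 := by
    intro r
    have h1 : L.ctx1.P.repr (Polynomial.aeval L.A f L.ctx1.ξ) r
        = f.eval (L.θ r) * L.ctx1.ε r := L.ctx1.aeval_reprP f L.ctx1.ξ r
    rw [hf] at h1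
    simp only [map_zero, Finsupp.coe_zero, Pi.zero_apply] at h1
    exact (mul_eq_zero.mp h1.symm).resolve_right (L.ctx1.eps_ne_zero r)
  apply Module.Basis.ext L.Pb
  intro i
  rw [aeval_apply_eigen L.A (L.θ i) _ (L.Pb_eig i) f, hz i, zero_smul, LinearMap.zero_apply]

end LeonardSystem

theorem LeonardSystem.S_characterization {K : Type} [Field K] {V : Type}
    [AddCommGroup V] [Module K V] {d : ℕ} (L : LeonardSystem K V d)
    (Xop : Module.End K V) (hX : Xop ≠ 0) :
    ((∃ c : K, Xop = c • L.S) ↔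
      (Xop ∈ Algebra.adjoin K {L.A} ∧
        Submodule.map Xop (LinearMap.range (L.Es 0)) ≤ LinearMap.range (L.Es (Fin.last d)))) ∧
    ((∃ c : K, Xop = c • L.S) →
      Submodule.map Xop (LinearMap.range (L.Es 0)) = LinearMap.range (L.Es (Fin.last d))) := by
  classical
  have hr0 : LinearMap.range (L.Es 0) = Submodule.span K {L.ctx1.ξ} := L.Es_range 0
  have hrd : LinearMap.range (L.Es (Fin.last d)) = Submodule.span K {L.zeta} :=
    L.Es_range (Fin.last d)
  have hξ0 : L.ctx1.ξ ∈ LinearMap.range (L.Es 0) := by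
    rw [hr0]
    exact Submodule.mem_span_singleton_self _
  have hz0 := L.zetaP0_ne_zero
  have hSξ := L.S_xi
  have hcc : L.ctx1.ε 0 / L.ctx1.P.repr L.zeta 0 ≠ 0 :=
    div_ne_zero (L.ctx1.eps_ne_zero 0) hz0
  have himg : ∀ t : K, (t • L.S) L.ctx1.ξ
      = (t * (L.ctx1.ε 0 / L.ctx1.P.repr L.zeta 0)) • L.zeta := by
    intro t
    rw [LinearMap.smul_apply, hSξ, smul_smul]
  constructor
  · constructor
    · rintro ⟨cc, rfl⟩
      constructor
      · exact Subalgebra.smul_mem _ L.S_mem_adjoin cc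
      · rw [hr0, hrd, Submodule.map_span, Set.image_singleton]
        rw [Submodule.span_le, Set.singleton_subset_iff]
        rw [himg cc]
        exact Submodule.smul_mem _ _ (Submodule.mem_span_singleton_self _)
    · rintro ⟨hadj, hmap⟩
      have h1 : Xop L.ctx1.ξ ∈ Submodule.span K {L.zeta} := by
        rw [← hrd]
        exact hmap (Submodule.mem_map_of_mem hξ0)
      obtain ⟨t, ht⟩ := Submodule.mem_span_singleton.mp h1
      have hzz : L.zeta = (L.ctx1.P.repr L.zeta 0 / L.ctx1.ε 0) • L.S L.ctx1.ξ := by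
        rw [hSξ, smul_smul]
        have hone : L.ctx1.P.repr L.zeta 0 / L.ctx1.ε 0
            * (L.ctx1.ε 0 / L.ctx1.P.repr L.zeta 0) = 1 := by
          field_simp [hz0, L.ctx1.eps_ne_zero 0]
        rw [hone, one_smul]
      rw [Algebra.adjoin_singleton_eq_range_aeval, AlgHom.mem_range] at hadj
      obtain ⟨fX, hfX⟩ := hadj
      have hSadj := L.S_mem_adjoin
      rw [Algebra.adjoin_singleton_eq_range_aeval, AlgHom.mem_range] at hSadj
      obtain ⟨fS, hfS⟩ := hSadj
      set cc := t * (L.ctx1.P.repr L.zeta 0 / L.ctx1.ε 0) with hccdef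
      refine ⟨cc, ?_⟩
      have hker : Polynomial.aeval L.A (fX - Polynomial.C cc * fS) L.ctx1.ξ = 0 := by
        rw [map_sub, map_mul, Polynomial.aeval_C, hfX, hfS, LinearMap.sub_apply]
        rw [Module.End.mul_apply, Module.algebraMap_end_apply]
        rw [← ht, hzz, smul_smul, ← hccdef, sub_self]
      have h0 := L.aeval_eq_zero_of_xi _ hker
      rw [map_sub, map_mul, Polynomial.aeval_C, hfX, hfS, sub_eq_zero] at h0
      rw [h0, Algebra.smul_def]
  · rintro ⟨cc, rfl⟩
    have hcc0 : cc ≠ 0 := fun h => hX (by rw [h, zero_smul])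
    rw [hr0, hrd, Submodule.map_span, Set.image_singleton, himg cc]
    exact Submodule.span_singleton_smul_eq
      (isUnit_iff_ne_zero.mpr (mul_ne_zero hcc0 hcc)) _
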